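/- Let ρ > 0 and let r, r' ∈ ℝ^d satisfy r + r' = 4ρ(r − r') and ‖r − r'‖ ≥ 1. Then for all vectors e, e' ∈ ℝ^d with ‖e‖ ≤ ρ and ‖e'‖ ≤ ρ, it holds that ‖r' − (e − e')‖ ≤ ‖r − (e − e')‖; that is, under the translation (TransE-style) model where the tuple embedding of an entity pair is t = e − e' and the score is −‖r − t‖, the constraints r + r' = 4ρ(r − r') and ‖r − r'‖ ≥ 1 together with entity embeddings constrained to the ball B(0, ρ) enforce the relational implication rule RelImp(r, r'). -/

import Mathlib

/-- Under the translation model with entity embeddings in B(0, ρ), the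
constraints r + r' = 4ρ(r − r') and ‖r − r'‖ ≥ 1 enforce RelImp(r, r'). -/
theorem relImp_translation_model {d : ℕ} (ρ : ℝ) (hρ : 0 < ρ)
    (r r' : EuclideanSpace ℝ (Fin d))
    (hsum : r + r' = (4 * ρ) • (r - r')) (hdiff : 1 ≤ ‖r - r'‖) :
    ∀ e e' : EuclideanSpace ℝ (Fin d), ‖e‖ ≤ ρ → ‖e'‖ ≤ ρ →
      ‖r' - (e - e')‖ ≤ ‖r - (e - e')‖ := by
  intro e e' he he'
  set t : EuclideanSpace ℝ (Fin d) := e - e' with ht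
  have htn : ‖t‖ ≤ 2 * ρ := by
    calc ‖t‖ ≤ ‖e‖ + ‖e'‖ := norm_sub_le e e'
    _ ≤ 2 * ρ := by linarith
  have hkey : ‖r‖ ^ 2 - ‖r'‖ ^ 2 = 4 * ρ * ‖r - r'‖ ^ 2 := by
    have h1 : inner ℝ (r + r') (r - r') = (4 * ρ) * (inner ℝ (r - r') (r - r') : ℝ) := by
      rw [hsum, real_inner_smul_left]
    rw [real_inner_self_eq_norm_sq] at h1
    have h2 : (inner ℝ (r + r') (r - r') : ℝ) = ‖r‖ ^ 2 - ‖r'‖ ^ 2 := by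
      rw [inner_add_left, inner_sub_right, inner_sub_right,
        real_inner_self_eq_norm_sq, real_inner_self_eq_norm_sq, real_inner_comm r r']
      ring
    linarith
  have hcauchy : (inner ℝ (r - r') t : ℝ) ≤ ‖r - r'‖ * ‖t‖ := real_inner_le_norm _ _
  have hsq : ‖r' - t‖ ^ 2 ≤ ‖r - t‖ ^ 2 := by
    have e1 : ‖r - t‖ ^ 2 = ‖r‖ ^ 2 - 2 * inner ℝ r t + ‖t‖ ^ 2 := norm_sub_sq_real r t
    have e2 : ‖r' - t‖ ^ 2 = ‖r'‖ ^ 2 - 2 * inner ℝ r' t + ‖t‖ ^ 2 := norm_sub_sq_real r' t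
    have e3 : (inner ℝ (r - r') t : ℝ) = inner ℝ r t - inner ℝ r' t := inner_sub_left r r' t
    nlinarith [norm_nonneg (r - r'), norm_nonneg t, sq_nonneg (‖r - r'‖ - 1)]
  calc ‖r' - t‖ = √(‖r' - t‖ ^ 2) := (Real.sqrt_sq (norm_nonneg _)).symm
  _ ≤ √(‖r - t‖ ^ 2) := Real.sqrt_le_sqrt hsq
  _ = ‖r - t‖ := Real.sqrt_sq (norm_nonneg _)
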